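/- Let V be a vector space over ℚ, let g and s be ℚ-linear endomorphisms of V with g ∘ s = s ∘ g, g ∘ g = id and s^{2n} = id for a fixed integer n ≥ 1, let φ : V → ℚ be ℚ-linear, and let q ∈ ℚ with q ≥ 1. Let λ₁ ∈ V, let v₁, …, v_N ∈ V satisfy g(s^{2n−1}(v_j)) = −v_j for all j, let m₁, …, m_N be natural numbers, and set λ = q·s^{2n−1}(λ₁) − g(λ₁) + ∑_{j=1}^{N} m_j · g(v_j). If φ(g(λ₁)) ≤ 0 and φ(g(λ₁)) ≤ ∑_{j=1}^{N} m_j · φ(g(v_j)), then ∑_{i=0}^{2n−1} qⁱ · φ( gⁱ( s^{2n−i}(λ) ) ) ≤ 0. -/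

import Mathlib

/-- Concluding inequality `K_α(λ) ≤ 0` in the proof of the paper's main theorem
(Theorem 4.10), abstracted: `g` an involution (`w_{0,I}`), `s^{2n} = id` (Frobenius),
`λ = q·s⁻¹(λ₁) − g(λ₁) + ∑ m_j·g(v_j)` with `g(s⁻¹(v_j)) = −v_j` (Hasse-type), and the
two hypotheses `φ(g λ₁) ≤ 0` and `φ(g λ₁) ≤ ∑ m_j φ(g v_j)`. -/
theorem stmt8 (V : Type*) [AddCommGroup V] [Module ℚ V]
    (g s : Module.End ℚ V) (hcomm : g * s = s * g) (hg : g * g = 1)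
    (n : ℕ) (hn : 1 ≤ n) (hs : s ^ (2 * n) = 1)
    (φ : V →ₗ[ℚ] ℚ) (q : ℚ) (hq : 1 ≤ q)
    (lam₁ : V) (N : ℕ) (v : Fin N → V)
    (hv : ∀ j, g ((s ^ (2 * n - 1)) (v j)) = -(v j))
    (m : Fin N → ℕ)
    (lam : V)
    (hlam : lam = q • (s ^ (2 * n - 1)) lam₁ - g lam₁ + ∑ j, (m j : ℚ) • g (v j))
    (h1 : φ (g lam₁) ≤ 0)
    (h2 : φ (g lam₁) ≤ ∑ j, (m j : ℚ) * φ (g (v j))) :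
    ∑ i ∈ Finset.range (2 * n), q ^ i * φ ((g ^ i) ((s ^ (2 * n - i)) lam)) ≤ 0 := by
  have hCgs : Commute g s := hcomm
  set t := s ^ (2 * n - 1) with ht
  have h2n : 2 * n - 1 + 1 = 2 * n := by omega
  have hst : s * t = 1 := by rw [ht, ← pow_succ', h2n, hs]
  have hgt : Commute g t := hCgs.pow_right _
  set u := g * t with hu
  have hug : u * g = t := by rw [hu, mul_assoc, ← hgt.eq, ← mul_assoc, hg, one_mul]
  have hgu : Commute g u := (Commute.refl g).mul_right hgt
  have hupow : ∀ i, u ^ i = g ^ i * t ^ i := fun i => hgt.mul_pow i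
  have ht2n : t ^ (2 * n) = 1 := by
    rw [ht, ← pow_mul, mul_comm (2 * n - 1), pow_mul, hs, one_pow]
  have hg2 : g ^ 2 = 1 := by rw [pow_two, hg]
  have hg2n : g ^ (2 * n) = 1 := by rw [pow_mul, hg2, one_pow]
  have hu2n : u ^ (2 * n) = 1 := by rw [hupow, hg2n, ht2n, one_mul]
  have hcst : Commute s t := (Commute.refl s).pow_right _
  have hpow : ∀ i, i ≤ 2 * n → s ^ (2 * n - i) = t ^ i := by
    intro i hi
    have e1 : s ^ (2 * n - i) * s ^ i = 1 := by
      rw [← pow_add, Nat.sub_add_cancel hi, hs]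
    have e2 : s ^ i * t ^ i = 1 := by rw [← hcst.mul_pow, hst, one_pow]
    calc s ^ (2 * n - i) = s ^ (2 * n - i) * (s ^ i * t ^ i) := by rw [e2, mul_one]
      _ = s ^ (2 * n - i) * s ^ i * t ^ i := (mul_assoc _ _ _).symm
      _ = t ^ i := by rw [e1, one_mul]
  have huv : ∀ (j : Fin N) (i : ℕ), (u ^ i) (v j) = ((-1 : ℚ) ^ i) • v j := by
    intro j i
    induction i with
    | zero => simp
    | succ i ih =>
      have huv1 : u (v j) = -(v j) := by
        rw [hu, Module.End.mul_apply]; exact hv j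
      rw [pow_succ, Module.End.mul_apply, huv1, map_neg, ih, pow_succ,
        mul_comm ((-1 : ℚ) ^ i), mul_smul]
      simp
  set C : ℕ → ℚ := fun i => φ ((u ^ i) (g lam₁)) with hC
  set S : ℚ := ∑ j, (m j : ℚ) * φ (g (v j)) with hS
  have hterm : ∀ i, i < 2 * n →
      φ ((g ^ i) ((s ^ (2 * n - i)) lam)) = q * C (i + 1) - C i + (-1 : ℚ) ^ i * S := by
    intro i hi
    rw [hpow i hi.le]
    have e0 : (g ^ i) ((t ^ i) lam) = (u ^ i) lam := by
      rw [hupow, Module.End.mul_apply]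
    rw [e0, hlam]
    have e1 : (u ^ i) (t lam₁) = (u ^ (i + 1)) (g lam₁) := by
      rw [← Module.End.mul_apply (u ^ i) t, ← hug, ← mul_assoc, ← pow_succ,
        Module.End.mul_apply]
    have e2 : ∀ j : Fin N, (u ^ i) (g (v j)) = ((-1 : ℚ) ^ i) • g (v j) := by
      intro j
      rw [← Module.End.mul_apply (u ^ i) g, ← (hgu.pow_right i).eq,
        Module.End.mul_apply, huv j i, map_smul]
    rw [map_add, map_sub, map_smul, map_sum, map_add, map_sub, map_smul, map_sum,
      e1]
    have e3 : ∑ j, φ ((u ^ i) ((m j : ℚ) • g (v j))) = (-1 : ℚ) ^ i * S := by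
      rw [hS, Finset.mul_sum]
      refine Finset.sum_congr rfl fun j _ => ?_
      simp only [map_smul, e2 j, smul_eq_mul]
      ring
    rw [e3]
    simp only [hC, smul_eq_mul]
  have hsum : ∑ i ∈ Finset.range (2 * n), q ^ i * φ ((g ^ i) ((s ^ (2 * n - i)) lam))
      = q ^ (2 * n) * C (2 * n) - q ^ 0 * C 0
        + (∑ i ∈ Finset.range (2 * n), (-q) ^ i) * S := by
    rw [Finset.sum_mul, ← Finset.sum_range_sub (fun i => q ^ i * C i) (2 * n),
      ← Finset.sum_add_distrib]
    refine Finset.sum_congr rfl fun i hi => ?_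
    rw [hterm i (Finset.mem_range.mp hi)]
    ring
  have hC2n : C (2 * n) = φ (g lam₁) := by rw [hC]; simp [hu2n]
  have hC0 : C 0 = φ (g lam₁) := by rw [hC]; simp
  rw [hsum, hC2n, hC0]
  set E : ℚ := ∑ i ∈ Finset.range (2 * n), (-q) ^ i with hE
  set P : ℚ := φ (g lam₁) with hP
  have hgeom : E * (-q - 1) = q ^ (2 * n) - 1 := by
    have := geom_sum_mul (-q) (2 * n)
    rwa [Even.neg_pow ⟨n, two_mul n⟩] at this
  have hq2n : (1 : ℚ) ≤ q ^ (2 * n) := one_le_pow₀ hq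
  have hD : (0 : ℚ) ≤ q ^ (2 * n) - 1 := by linarith
  have hq0 : (0 : ℚ) ≤ q := by linarith
  have hq1 : (0 : ℚ) < q + 1 := by linarith
  have hES : (q + 1) * (E * S) = (1 - q ^ (2 * n)) * S := by
    linear_combination (-S) * hgeom
  have hfin : (q + 1) * (q ^ (2 * n) * P - q ^ 0 * P + E * S) ≤ 0 := by
    have hintA : 0 ≤ (q ^ (2 * n) - 1) * (S - P) :=
      mul_nonneg hD (by rw [hS, hP]; linarith)
    have hintB : 0 ≤ q * (q ^ (2 * n) - 1) * (-P) :=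
      mul_nonneg (mul_nonneg hq0 hD) (by rw [hP]; linarith)
    have : q ^ 0 = (1 : ℚ) := pow_zero q
    nlinarith [hES, hintA, hintB]
  nlinarith [hfin, hq1]
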